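/- Weighted vanishing sum (identity (t15), second part of Lemma 2 of the paper): for every k with 1 ≤ k ≤ N and every m ∈ {1,…,N}, ∑_{I ⊆ {1,…,N}, |I| = k, m ∈ I} ( ∏_{i∈I, j∉I} φ(x_j − x_i) ) · ( ∑_{l ∈ I, l ≠ m} f(x_l − x_m) ) = 0. -/

import Mathlib

open Complex Finset

/-- The odd theta function `ϑ(z|τ)`. -/
noncomputable def ϑ (τ : ℂ) (z : ℂ) : ℂ :=
  -∑' k : ℤ, Complex.exp (Real.pi * Complex.I * τ * ((k : ℂ) + 1 / 2) ^ 2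
      + 2 * Real.pi * Complex.I * (z + 1 / 2) * ((k : ℂ) + 1 / 2))

/-- The Kronecker elliptic function `φ(z) = ϑ'(0)·ϑ(z+ħ)/(ϑ(z)·ϑ(ħ))`. -/
noncomputable def φ₁ (τ hbar z : ℂ) : ℂ :=
  deriv (ϑ τ) 0 * ϑ τ (z + hbar) / (ϑ τ z * ϑ τ hbar)

/-- The first Eisenstein function `E₁(z) = ϑ'(z)/ϑ(z)`. -/
noncomputable def E₁ (τ z : ℂ) : ℂ := deriv (ϑ τ) z / ϑ τ z

/-- `g(x) = E₁(ħ+x) − E₁(x)`. -/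
noncomputable def gfun (τ hbar x : ℂ) : ℂ := E₁ τ (hbar + x) - E₁ τ x

/-- `f(x) = g(x) − g(−x)`. -/
noncomputable def ffun (τ hbar x : ℂ) : ℂ := gfun τ hbar x - gfun τ hbar (-x)

lemma theta_add_one (τ z : ℂ) : ϑ τ (z + 1) = -ϑ τ z := by
  unfold ϑ
  rw [neg_neg, ← tsum_neg]
  refine tsum_congr fun k => ?_
  have h : Real.pi * Complex.I * τ * ((k : ℂ) + 1 / 2) ^ 2
      + 2 * Real.pi * Complex.I * (z + 1 + 1 / 2) * ((k : ℂ) + 1 / 2)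
      = (Real.pi * Complex.I * τ * ((k : ℂ) + 1 / 2) ^ 2
      + 2 * Real.pi * Complex.I * (z + 1 / 2) * ((k : ℂ) + 1 / 2))
      + ((k : ℂ) * (2 * Real.pi * Complex.I) + Real.pi * Complex.I) := by ring
  rw [h]
  simp [Complex.exp_add, Complex.exp_int_mul_two_pi_mul_I, Complex.exp_pi_mul_I]

lemma deriv_theta_add_one (τ z : ℂ) : deriv (ϑ τ) (z + 1) = -deriv (ϑ τ) z := by
  have h1 : (fun w : ℂ => ϑ τ (w + 1)) = fun w => -ϑ τ w := by
    funext w; exact theta_add_one τ w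
  have h2 := deriv_comp_add_const (ϑ τ) 1 z
  rw [h1] at h2
  rw [← h2, deriv.fun_neg]

lemma E1_add_one (τ z : ℂ) : E₁ τ (z + 1) = E₁ τ z := by
  unfold E₁
  rw [theta_add_one, deriv_theta_add_one, neg_div_neg_eq]

lemma E1_add_int (τ z : ℂ) (n : ℤ) : E₁ τ (z + n) = E₁ τ z := by
  induction n using Int.induction_on with
  | zero => simp
  | succ n ih =>
    rw [show (((n:ℤ) + 1 : ℤ) : ℂ) = ((n:ℤ) : ℂ) + 1 by push_cast; ring,
      ← add_assoc, E1_add_one]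
    exact ih
  | pred n ih =>
    have h := E1_add_one τ (z + (-(n : ℤ) - 1 : ℤ))
    have e : z + (-(n : ℤ) - 1 : ℤ) + 1 = z + (-(n : ℤ) : ℤ) := by push_cast; ring
    rw [e] at h
    rw [← h]; exact ih ▸ rfl

lemma gfun_add_int (τ hbar z : ℂ) (n : ℤ) : gfun τ hbar (z + n) = gfun τ hbar z := by
  unfold gfun
  rw [show hbar + (z + n) = (hbar + z) + n by ring, E1_add_int, E1_add_int]

lemma ffun_add_int (τ hbar z : ℂ) (n : ℤ) : ffun τ hbar (z + n) = ffun τ hbar z := by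
  unfold ffun
  rw [gfun_add_int, show -(z + n) = -z + (-n : ℤ) by push_cast; ring, gfun_add_int]

lemma ffun_neg (τ hbar z : ℂ) : ffun τ hbar (-z) = -ffun τ hbar z := by
  unfold ffun; rw [neg_neg]; ring

lemma phi_add_one (τ hbar z : ℂ) : φ₁ τ hbar (z + 1) = φ₁ τ hbar z := by
  unfold φ₁
  rw [show z + 1 + hbar = (z + hbar) + 1 by ring, theta_add_one, theta_add_one,
    neg_mul, mul_neg, neg_div_neg_eq]

lemma phi_add_int (τ hbar z : ℂ) (n : ℤ) : φ₁ τ hbar (z + n) = φ₁ τ hbar z := by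
  induction n using Int.induction_on with
  | zero => simp
  | succ n ih =>
    rw [show (((n:ℤ) + 1 : ℤ) : ℂ) = ((n:ℤ) : ℂ) + 1 by push_cast; ring,
      ← add_assoc, phi_add_one]
    exact ih
  | pred n ih =>
    have h := phi_add_one τ hbar (z + (-(n : ℤ) - 1 : ℤ))
    have e : z + (-(n : ℤ) - 1 : ℤ) + 1 = z + (-(n : ℤ) : ℤ) := by push_cast; ring
    rw [e] at h
    rw [← h]; exact ih ▸ rfl

/-- Reflection `j ↦ 2m − j` on `{1,…,N}` (cyclically). -/
def σc (N m j : ℕ) : ℕ := (2*m + 2*N - 1 - j) % N + 1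

/-- Cyclic shift `x ↦ x + t` on `{1,…,N}`. -/
def ρc (N t x : ℕ) : ℕ := (x + t - 1) % N + 1

lemma sigma_mem {N : ℕ} (hN : 0 < N) (m j : ℕ) : σc N m j ∈ Finset.Icc 1 N := by
  have := Nat.mod_lt (2*m + 2*N - 1 - j) hN
  simp only [σc, Finset.mem_Icc]; omega

lemma rho_mem {N : ℕ} (hN : 0 < N) (t x : ℕ) : ρc N t x ∈ Finset.Icc 1 N := by
  have := Nat.mod_lt (x + t - 1) hN
  simp only [ρc, Finset.mem_Icc]; omega

lemma eq_of_modeq_mem {N a b : ℕ} (ha : a ∈ Finset.Icc 1 N) (hb : b ∈ Finset.Icc 1 N)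
    (h : a ≡ b [MOD N]) : a = b := by
  simp only [Finset.mem_Icc] at ha hb
  have h' : (a-1) ≡ (b-1) [MOD N] := by
    apply Nat.ModEq.add_right_cancel' 1
    have e1 : a - 1 + 1 = a := by omega
    have e2 : b - 1 + 1 = b := by omega
    rw [e1, e2]; exact h
  have h2 : (a-1) % N = (b-1) % N := h'
  rw [Nat.mod_eq_of_lt (by omega), Nat.mod_eq_of_lt (by omega)] at h2
  omega

lemma sigma_modeq {N : ℕ} (hN : 0 < N) {m j : ℕ} (hj : j ≤ N) :
    σc N m j + j ≡ 2*m [MOD N] := by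
  have h1 : (2*m + 2*N - 1 - j) % N ≡ 2*m + 2*N - 1 - j [MOD N] := Nat.mod_modEq _ _
  have h2 : σc N m j + j ≡ (2*m + 2*N - 1 - j) + (1 + j) [MOD N] := by
    have : σc N m j + j = (2*m + 2*N - 1 - j) % N + (1 + j) := by
      simp only [σc]; ring
    rw [this]; exact h1.add_right _
  have e : (2*m + 2*N - 1 - j) + (1 + j) = 2*m + 2*N := by omega
  rw [e] at h2
  have h3 : 2*m + 2*N ≡ 2*m [MOD N] := by
    have : (2*m + 2*N) % N = (2*m) % N := by
      conv_lhs => rw [show 2*m + 2*N = 2*m + N + N by ring]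
      rw [Nat.add_mod_right, Nat.add_mod_right]
    exact this
  exact h2.trans h3

lemma sigma_invol {N m : ℕ} (hN : 0 < N) {j : ℕ} (hj : j ∈ Finset.Icc 1 N) :
    σc N m (σc N m j) = j := by
  have hjN : j ≤ N := (Finset.mem_Icc.mp hj).2
  have hsj := sigma_mem hN m j
  have hsjN : σc N m j ≤ N := (Finset.mem_Icc.mp hsj).2
  apply eq_of_modeq_mem (sigma_mem hN m _) hj
  have h1 := sigma_modeq (N := N) hN (m := m) hsjN
  have h2 := sigma_modeq (N := N) hN (m := m) hjN
  have h3 : σc N m (σc N m j) + σc N m j ≡ j + σc N m j [MOD N] := by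
    refine h1.trans ?_
    rw [show j + σc N m j = σc N m j + j by ring]
    exact h2.symm
  exact Nat.ModEq.add_right_cancel' _ h3

lemma sigma_fix {N m : ℕ} (hN : 0 < N) (hm : m ∈ Finset.Icc 1 N) : σc N m m = m := by
  have hmN : m ≤ N := (Finset.mem_Icc.mp hm).2
  apply eq_of_modeq_mem (sigma_mem hN m m) hm
  have h := sigma_modeq (N := N) hN (m := m) hmN
  have : σc N m m + m ≡ m + m [MOD N] := by rw [show m + m = 2*m by ring]; exact h
  exact Nat.ModEq.add_right_cancel' _ this

lemma rho_modeq {N t x : ℕ} (hx : 1 ≤ x) : ρc N t x ≡ x + t [MOD N] := by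
  have h1 : (x + t - 1) % N ≡ x + t - 1 [MOD N] := Nat.mod_modEq _ _
  have h2 : ρc N t x ≡ (x + t - 1) + 1 [MOD N] := h1.add_right 1
  rwa [show x + t - 1 + 1 = x + t by omega] at h2

lemma rho_rho {N d x : ℕ} (hN : 0 < N) (hd : d ≤ N) (hx : x ∈ Finset.Icc 1 N) :
    ρc N (N - d) (ρc N d x) = x := by
  have hx1 : 1 ≤ x := (Finset.mem_Icc.mp hx).1
  apply eq_of_modeq_mem (rho_mem hN _ _) hx
  have h1 : ρc N (N-d) (ρc N d x) ≡ ρc N d x + (N-d) [MOD N] := by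
    have := rho_modeq (N := N) (t := N-d) (x := ρc N d x) (by
      have := rho_mem hN d x; exact (Finset.mem_Icc.mp this).1)
    exact this
  have h2 : ρc N d x + (N-d) ≡ (x + d) + (N-d) [MOD N] :=
    (rho_modeq hx1).add_right _
  have e : (x + d) + (N - d) = x + N := by omega
  rw [e] at h2
  have h3 : x + N ≡ x [MOD N] := by
    show (x + N) % N = x % N
    exact Nat.add_mod_right x N
  exact (h1.trans h2).trans h3

lemma cast_div_modeq {N : ℕ} (hN : 0 < N) {a b : ℕ} (h : a ≡ b [MOD N]) :
    ∃ c : ℤ, (a : ℂ)/N = (b : ℂ)/N + c := by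
  obtain ⟨c, hc⟩ := (Nat.modEq_iff_dvd.mp h)
  refine ⟨-c, ?_⟩
  have hN' : (N:ℂ) ≠ 0 := Nat.cast_ne_zero.mpr hN.ne'
  have h2 : (a:ℤ) = (b:ℤ) + (-c)*(N:ℤ) := by linarith [hc]
  have h3 : (a:ℂ) = (b:ℂ) + (-c : ℤ)*(N:ℂ) := by exact_mod_cast h2
  field_simp [h3]
  linear_combination h3

lemma modeq_of_D {N i j d : ℕ} (hi : i ≤ N) (h : (j + N - i) % N = d) :
    j + N ≡ d + i [MOD N] := by
  have h1 : (j + N - i) ≡ d [MOD N] := by rw [← h]; exact (Nat.mod_modEq _ _).symm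
  have h2 := h1.add_right i
  rwa [show j + N - i + i = j + N by omega] at h2

lemma add_N_modeq (N x : ℕ) : x + N ≡ x [MOD N] := by
  show (x + N) % N = x % N
  exact Nat.add_mod_right x N

lemma D_eq {N i j d : ℕ} (hi : i ≤ N) (hd : d < N) (h : j ≡ i + d [MOD N]) :
    (j + N - i) % N = d := by
  have h2 : (j + N - i) + i ≡ d + i [MOD N] := by
    rw [show j + N - i + i = j + N by omega]
    calc j + N ≡ j [MOD N] := add_N_modeq N j
      _ ≡ i + d [MOD N] := h
      _ = d + i := by ring
  have h3 : (j + N - i) ≡ d [MOD N] := Nat.ModEq.add_right_cancel' i h2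
  have h4 : (j + N - i) % N = d % N := h3
  rwa [Nat.mod_eq_of_lt hd] at h4

/-- key cardinality lemma: fibers of the difference map on `I × (S \ I)` are
negation-symmetric. -/
lemma count_fiber_eq {N : ℕ} (hN : 0 < N) {I : Finset ℕ} (hI : I ⊆ Finset.Icc 1 N)
    (d : ℕ) :
    ((I ×ˢ (Finset.Icc 1 N \ I)).filter fun p => (p.2 + N - p.1) % N = d).card
      = ((I ×ˢ (Finset.Icc 1 N \ I)).filter fun p => (p.1 + N - p.2) % N = d).card := by
  have hmem : ∀ p : ℕ × ℕ, p ∈ I ×ˢ (Finset.Icc 1 N \ I) →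
      p.1 ∈ I ∧ p.2 ∉ I ∧ 1 ≤ p.1 ∧ p.1 ≤ N ∧ 1 ≤ p.2 ∧ p.2 ≤ N := by
    intro p hp
    rw [Finset.mem_product, Finset.mem_sdiff] at hp
    have h1 := hI hp.1
    rw [Finset.mem_Icc] at h1
    have h2 := hp.2.1
    rw [Finset.mem_Icc] at h2
    exact ⟨hp.1, hp.2.2, h1.1, h1.2, h2.1, h2.2⟩
  by_cases hd : 1 ≤ d ∧ d < N
  · obtain ⟨hd1, hdN⟩ := hd
    -- first filter has card of A = I.filter (ρ d · ∉ I)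
    have e1 : ((I ×ˢ (Finset.Icc 1 N \ I)).filter fun p => (p.2 + N - p.1) % N = d).card
        = (I.filter fun i => ρc N d i ∉ I).card := by
      apply Finset.card_bij' (fun p _ => p.1) (fun i _ => (i, ρc N d i))
      · intro p hp
        rw [Finset.mem_filter] at hp ⊢
        obtain ⟨hp1, hp2⟩ := hp
        obtain ⟨hpI, hpnI, h11, h1N, h21, h2N⟩ := hmem p hp1
        have hkey : p.2 = ρc N d p.1 := by
          apply eq_of_modeq_mem (Finset.mem_Icc.mpr ⟨h21, h2N⟩) (rho_mem hN d p.1)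
          have hm1 := modeq_of_D h1N hp2
          have : p.2 ≡ p.1 + d [MOD N] := by
            have := Nat.ModEq.add_right_cancel' N (by
              calc p.2 + N ≡ d + p.1 [MOD N] := hm1
                _ ≡ d + p.1 + N [MOD N] := (add_N_modeq N (d + p.1)).symm
                _ = (p.1 + d) + N := by ring)
            exact this
          exact this.trans (rho_modeq h11).symm
        rw [← hkey]
        exact ⟨hpI, hpnI⟩
      · intro i hi
        rw [Finset.mem_filter] at hi
        obtain ⟨hiI, hinI⟩ := hi
        have hiIcc := hI hiI
        rw [Finset.mem_Icc] at hiIcc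
        rw [Finset.mem_filter, Finset.mem_product, Finset.mem_sdiff]
        refine ⟨⟨hiI, rho_mem hN d i, hinI⟩, ?_⟩
        exact D_eq hiIcc.2 hdN (rho_modeq hiIcc.1)
      · intro p hp
        rw [Finset.mem_filter] at hp
        obtain ⟨hp1, hp2⟩ := hp
        obtain ⟨hpI, hpnI, h11, h1N, h21, h2N⟩ := hmem p hp1
        have hkey : p.2 = ρc N d p.1 := by
          apply eq_of_modeq_mem (Finset.mem_Icc.mpr ⟨h21, h2N⟩) (rho_mem hN d p.1)
          have hm1 := modeq_of_D h1N hp2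
          have : p.2 ≡ p.1 + d [MOD N] := by
            have := Nat.ModEq.add_right_cancel' N (by
              calc p.2 + N ≡ d + p.1 [MOD N] := hm1
                _ ≡ d + p.1 + N [MOD N] := (add_N_modeq N (d + p.1)).symm
                _ = (p.1 + d) + N := by ring)
            exact this
          exact this.trans (rho_modeq h11).symm
        exact Prod.ext rfl hkey.symm
      · intro i hi; rfl
    have e2 : ((I ×ˢ (Finset.Icc 1 N \ I)).filter fun p => (p.1 + N - p.2) % N = d).card
        = (I.filter fun i => ρc N (N - d) i ∉ I).card := by
      have hkey : ∀ p ∈ (I ×ˢ (Finset.Icc 1 N \ I)).filter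
          (fun p => (p.1 + N - p.2) % N = d), p.2 = ρc N (N - d) p.1 := by
        intro p hp
        rw [Finset.mem_filter] at hp
        obtain ⟨hp1, hp2⟩ := hp
        obtain ⟨hpI, hpnI, h11, h1N, h21, h2N⟩ := hmem p hp1
        apply eq_of_modeq_mem (Finset.mem_Icc.mpr ⟨h21, h2N⟩) (rho_mem hN (N-d) p.1)
        have hm1 := modeq_of_D h2N hp2
        have h5 : p.2 ≡ p.1 + (N - d) [MOD N] := by
          have h6 : p.2 + d + (N - d) ≡ (p.1 + (N-d)) + N [MOD N] := by
            calc p.2 + d + (N - d) ≡ (d + p.2) + (N - d) [MOD N] := by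
                  rw [show p.2 + d = d + p.2 by ring]
              _ ≡ (p.1 + N) + (N - d) [MOD N] := hm1.symm.add_right _
              _ = (p.1 + (N-d)) + N := by ring
          have h7 : p.2 + d + (N - d) = p.2 + N := by omega
          rw [h7] at h6
          exact (add_N_modeq N p.2).symm.trans
            (h6.trans (add_N_modeq N (p.1 + (N-d))))
        exact h5.trans (rho_modeq h11).symm
      apply Finset.card_bij' (fun p _ => p.1) (fun i _ => (i, ρc N (N-d) i))
      · intro p hp
        have hk := hkey p hp
        rw [Finset.mem_filter] at hp ⊢
        obtain ⟨hp1, hp2⟩ := hp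
        obtain ⟨hpI, hpnI, _, _, _, _⟩ := hmem p hp1
        rw [← hk]
        exact ⟨hpI, hpnI⟩
      · intro i hi
        rw [Finset.mem_filter] at hi
        obtain ⟨hiI, hinI⟩ := hi
        have hiIcc := hI hiI
        rw [Finset.mem_Icc] at hiIcc
        rw [Finset.mem_filter, Finset.mem_product, Finset.mem_sdiff]
        refine ⟨⟨hiI, rho_mem hN (N-d) i, hinI⟩, ?_⟩
        have hρ := rho_mem hN (N-d) i
        rw [Finset.mem_Icc] at hρ
        apply D_eq hρ.2 hdN
        have : ρc N (N-d) i + d ≡ i + (N-d) + d [MOD N] := (rho_modeq hiIcc.1).add_right d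
        rw [show i + (N-d) + d = i + N by omega] at this
        exact ((this.trans (add_N_modeq N i)).symm : i ≡ ρc N (N-d) i + d [MOD N])
      · intro p hp
        exact Prod.ext rfl (hkey p hp).symm
      · intro i hi; rfl
    rw [e1, e2]
    -- complements of equinumerous subsets of I
    have hBB : (I.filter fun i => ρc N d i ∈ I).card
        = (I.filter fun i => ρc N (N-d) i ∈ I).card := by
      apply Finset.card_bij' (fun i _ => ρc N d i) (fun i _ => ρc N (N-d) i)
      · intro i hi
        rw [Finset.mem_filter] at hi ⊢
        refine ⟨hi.2, ?_⟩
        rw [rho_rho hN (le_of_lt hdN) (hI hi.1)]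
        exact hi.1
      · intro i hi
        rw [Finset.mem_filter] at hi ⊢
        refine ⟨hi.2, ?_⟩
        have : ρc N (N - (N-d)) (ρc N (N-d) i) = i := rho_rho hN (by omega) (hI hi.1)
        rw [show N - (N-d) = d by omega] at this
        rw [this]
        exact hi.1
      · intro i hi
        rw [Finset.mem_filter] at hi
        exact rho_rho hN (le_of_lt hdN) (hI hi.1)
      · intro i hi
        rw [Finset.mem_filter] at hi
        have : ρc N (N - (N-d)) (ρc N (N-d) i) = i := rho_rho hN (by omega) (hI hi.1)
        rwa [show N - (N-d) = d by omega] at this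
    have c1 := Finset.card_filter_add_card_filter_not
      (s := I) (p := fun i => ρc N d i ∈ I)
    have c2 := Finset.card_filter_add_card_filter_not
      (s := I) (p := fun i => ρc N (N-d) i ∈ I)
    omega
  · -- degenerate d: both filters are empty
    have hempty : ∀ (f : ℕ × ℕ → ℕ), (∀ p ∈ I ×ˢ (Finset.Icc 1 N \ I), f p % N ≠ d) →
        ((I ×ˢ (Finset.Icc 1 N \ I)).filter fun p => f p % N = d).card = 0 := by
      intro f hf
      rw [Finset.card_eq_zero, Finset.filter_eq_empty_iff]
      intro p hp
      exact hf p hp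
    rcases Nat.lt_or_ge d N with hdN | hdN
    · have hd0 : d = 0 := by omega
      subst hd0
      have key : ∀ a b : ℕ, 1 ≤ a → a ≤ N → 1 ≤ b → b ≤ N → a ≠ b →
          (b + N - a) % N ≠ 0 := by
        intro a b ha1 haN hb1 hbN hab h0
        have hdvd := Nat.dvd_of_mod_eq_zero h0
        have h1 : 1 ≤ b + N - a := by omega
        have h2 : b + N - a < 2*N := by omega
        have h3 : b + N - a = N := by
          rcases hdvd with ⟨c, hc⟩
          have hc1 : c ≠ 0 := by rintro rfl; omega
          have hc2 : c < 2 := by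
            by_contra hcon
            push_neg at hcon
            have := Nat.mul_le_mul_left N hcon
            omega
          have : c = 1 := by omega
          subst this
          omega
        omega
      rw [hempty _ (fun p hp => by
            obtain ⟨hpI, hpnI, h11, h1N, h21, h2N⟩ := hmem p hp
            exact key p.1 p.2 h11 h1N h21 h2N (fun h => hpnI (h ▸ hpI))),
          hempty _ (fun p hp => by
            obtain ⟨hpI, hpnI, h11, h1N, h21, h2N⟩ := hmem p hp
            exact key p.2 p.1 h21 h2N h11 h1N (fun h => hpnI (h ▸ hpI)))]
    · rw [hempty _ (fun p hp => by have := Nat.mod_lt (p.2 + N - p.1) hN; omega),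
          hempty _ (fun p hp => by have := Nat.mod_lt (p.1 + N - p.2) hN; omega)]

lemma prod_comp_eq_of_card_filter_eq {α β M : Type*} [DecidableEq α] [DecidableEq β]
    [CommMonoid M] (s : Finset α) (g₁ g₂ : α → β) (f : β → M)
    (h : ∀ b, (s.filter fun a => g₁ a = b).card = (s.filter fun a => g₂ a = b).card) :
    ∏ a ∈ s, f (g₁ a) = ∏ a ∈ s, f (g₂ a) := by
  have hms : s.val.map g₁ = s.val.map g₂ := by
    ext b
    rw [Multiset.count_map, Multiset.count_map]
    have h1 : (s.val.filter fun a => b = g₁ a) = (s.val.filter fun a => g₁ a = b) := by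
      apply Multiset.filter_congr; intro x _; exact eq_comm
    have h2 : (s.val.filter fun a => b = g₂ a) = (s.val.filter fun a => g₂ a = b) := by
      apply Multiset.filter_congr; intro x _; exact eq_comm
    rw [h1, h2]
    have hb := h b
    rw [Finset.card_def, Finset.card_def, Finset.filter_val, Finset.filter_val] at hb
    exact hb
  calc ∏ a ∈ s, f (g₁ a) = ((s.val.map g₁).map f).prod := by
        rw [Finset.prod_eq_multiset_prod, Multiset.map_map]; rfl
    _ = ((s.val.map g₂).map f).prod := by rw [hms]
    _ = ∏ a ∈ s, f (g₂ a) := by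
        rw [Finset.prod_eq_multiset_prod, Multiset.map_map]; rfl

lemma phi_normalize {N : ℕ} (hN : 0 < N) (τ hbar : ℂ) {i j : ℕ} (hi : i ≤ N) :
    φ₁ τ hbar ((j:ℂ)/N - (i:ℂ)/N)
      = φ₁ τ hbar ((((j + N - i) % N : ℕ) : ℂ)/N) := by
  obtain ⟨c, hc⟩ := cast_div_modeq hN (Nat.mod_modEq (j + N - i) N).symm
  -- hc : ((j+N-i : ℕ):ℂ)/N = ((j+N-i)%N : ℂ)/N + c
  have hNne : (N:ℂ) ≠ 0 := Nat.cast_ne_zero.mpr hN.ne'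
  have hcast : ((j + N - i : ℕ) : ℂ) = (j:ℂ) + N - i := by
    push_cast [Nat.cast_sub (by omega : i ≤ j + N)]
    ring
  have harg : (j:ℂ)/N - (i:ℂ)/N = (((j + N - i) % N : ℕ) : ℂ)/N + ((c - 1 : ℤ) : ℂ) := by
    have h2 : ((j:ℂ) + N - i)/N = (((j + N - i) % N : ℕ) : ℂ)/N + c := by
      rw [← hcast]; exact hc
    push_cast
    field_simp at h2 ⊢
    linear_combination h2
  rw [harg, phi_add_int]

lemma pair_prod_eq {N : ℕ} (hN : 0 < N) (τ hbar : ℂ) {I : Finset ℕ}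
    (hI : I ⊆ Finset.Icc 1 N) :
    ∏ p ∈ I ×ˢ (Finset.Icc 1 N \ I), φ₁ τ hbar ((p.1:ℂ)/N - (p.2:ℂ)/N)
      = ∏ p ∈ I ×ˢ (Finset.Icc 1 N \ I), φ₁ τ hbar ((p.2:ℂ)/N - (p.1:ℂ)/N) := by
  have hb : ∀ p : ℕ × ℕ, p ∈ I ×ˢ (Finset.Icc 1 N \ I) → p.1 ≤ N ∧ p.2 ≤ N := by
    intro p hp
    rw [Finset.mem_product, Finset.mem_sdiff] at hp
    have h1 := hI hp.1; have h2 := hp.2.1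
    rw [Finset.mem_Icc] at h1 h2
    exact ⟨h1.2, h2.2⟩
  calc ∏ p ∈ I ×ˢ (Finset.Icc 1 N \ I), φ₁ τ hbar ((p.1:ℂ)/N - (p.2:ℂ)/N)
      = ∏ p ∈ I ×ˢ (Finset.Icc 1 N \ I),
          φ₁ τ hbar ((((p.1 + N - p.2) % N : ℕ) : ℂ)/N) := by
        apply Finset.prod_congr rfl
        intro p hp
        exact phi_normalize hN τ hbar (hb p hp).2
    _ = ∏ p ∈ I ×ˢ (Finset.Icc 1 N \ I),
          φ₁ τ hbar ((((p.2 + N - p.1) % N : ℕ) : ℂ)/N) := by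
        apply prod_comp_eq_of_card_filter_eq _ _ _
          (fun d : ℕ => φ₁ τ hbar ((d : ℂ)/N))
        intro d
        exact (count_fiber_eq hN hI d).symm
    _ = ∏ p ∈ I ×ˢ (Finset.Icc 1 N \ I), φ₁ τ hbar ((p.2:ℂ)/N - (p.1:ℂ)/N) := by
        apply Finset.prod_congr rfl
        intro p hp
        exact (phi_normalize hN τ hbar (hb p hp).1).symm

lemma phi_sigma {N m : ℕ} (hN : 0 < N) (τ hbar : ℂ) {i j : ℕ}
    (hi : i ∈ Finset.Icc 1 N) (hj : j ∈ Finset.Icc 1 N) :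
    φ₁ τ hbar ((σc N m j : ℂ)/N - (σc N m i : ℂ)/N)
      = φ₁ τ hbar ((i:ℂ)/N - (j:ℂ)/N) := by
  have hiN := (Finset.mem_Icc.mp hi).2
  have hjN := (Finset.mem_Icc.mp hj).2
  obtain ⟨c₁, hc₁⟩ := cast_div_modeq hN (sigma_modeq (m := m) hN hjN)
  obtain ⟨c₂, hc₂⟩ := cast_div_modeq hN (sigma_modeq (m := m) hN hiN)
  have hNne : (N:ℂ) ≠ 0 := Nat.cast_ne_zero.mpr hN.ne'
  have harg : (σc N m j : ℂ)/N - (σc N m i : ℂ)/N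
      = ((i:ℂ)/N - (j:ℂ)/N) + ((c₁ - c₂ : ℤ) : ℂ) := by
    push_cast at hc₁ hc₂ ⊢
    field_simp at hc₁ hc₂ ⊢
    linear_combination hc₁ - hc₂
  rw [harg, phi_add_int]

lemma ffun_sigma {N m : ℕ} (hN : 0 < N) (τ hbar : ℂ) {l : ℕ}
    (hl : l ∈ Finset.Icc 1 N) :
    ffun τ hbar ((σc N m l : ℂ)/N - (m:ℂ)/N)
      = - ffun τ hbar ((l:ℂ)/N - (m:ℂ)/N) := by
  have hlN := (Finset.mem_Icc.mp hl).2
  obtain ⟨c, hc⟩ := cast_div_modeq hN (sigma_modeq (m := m) hN hlN)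
  have hNne : (N:ℂ) ≠ 0 := Nat.cast_ne_zero.mpr hN.ne'
  have harg : (σc N m l : ℂ)/N - (m:ℂ)/N
      = ((m:ℂ)/N - (l:ℂ)/N) + (c : ℂ) := by
    push_cast at hc ⊢
    field_simp at hc ⊢
    linear_combination hc
  rw [harg, ffun_add_int, show (m:ℂ)/N - (l:ℂ)/N = -((l:ℂ)/N - (m:ℂ)/N) by ring,
    ffun_neg]


/-- Identity (t15) of the paper: the weighted vanishing sum. -/
theorem weighted_f_sum_vanishes (τ : ℂ) (hτ : 0 < τ.im) (hbar : ℂ) (N : ℕ) (hN : 0 < N)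
    (k : ℕ) (hk1 : 1 ≤ k) (hkN : k ≤ N) (m : ℕ) (hm : m ∈ Finset.Icc 1 N) :
    ∑ I ∈ ((Finset.Icc 1 N).powersetCard k).filter (fun I => m ∈ I),
      (∏ i ∈ I, ∏ j ∈ Finset.Icc 1 N \ I, φ₁ τ hbar ((j : ℂ) / N - (i : ℂ) / N)) *
        (∑ l ∈ I.erase m, ffun τ hbar ((l : ℂ) / N - (m : ℂ) / N)) = 0 := by
  classical
  set S : Finset ℕ := Finset.Icc 1 N with hS
  set σ : ℕ → ℕ := σc N m with hσdef
  -- basic facts about σ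
  have hσS : ∀ j, σ j ∈ S := fun j => sigma_mem hN m j
  have hσσ : ∀ j ∈ S, σ (σ j) = j := fun j hj => sigma_invol hN hj
  have hσm : σ m = m := sigma_fix hN hm
  have hσinj : ∀ a ∈ S, ∀ b ∈ S, σ a = σ b → a = b := by
    intro a ha b hb hab
    rw [← hσσ a ha, ← hσσ b hb, hab]
  set s : Finset (Finset ℕ) := (S.powersetCard k).filter (fun I => m ∈ I) with hs
  have hmem : ∀ I ∈ s, I ⊆ S ∧ I.card = k ∧ m ∈ I := by
    intro I hI
    rw [hs, Finset.mem_filter, Finset.mem_powersetCard] at hI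
    exact ⟨hI.1.1, hI.1.2, hI.2⟩
  set Φ : Finset ℕ → Finset ℕ := fun I => I.image σ with hΦdef
  have hΦmem : ∀ I ∈ s, Φ I ∈ s := by
    intro I hI
    obtain ⟨hIS, hIk, hImI⟩ := hmem I hI
    rw [hs, Finset.mem_filter, Finset.mem_powersetCard]
    refine ⟨⟨?_, ?_⟩, ?_⟩
    · intro x hx
      rw [hΦdef] at hx
      obtain ⟨a, _, rfl⟩ := Finset.mem_image.mp hx
      exact hσS a
    · rw [hΦdef]
      rw [Finset.card_image_of_injOn (fun a ha b hb hab =>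
        hσinj a (hIS ha) b (hIS hb) hab)]
      exact hIk
    · rw [hΦdef]
      rw [← hσm]
      exact Finset.mem_image_of_mem σ hImI
  have hΦΦ : ∀ I ∈ s, Φ (Φ I) = I := by
    intro I hI
    obtain ⟨hIS, _, _⟩ := hmem I hI
    show Finset.image σ (Finset.image σ I) = I
    rw [Finset.image_image]
    have : ∀ x ∈ I, (σ ∘ σ) x = id x := fun x hx => hσσ x (hIS hx)
    rw [Finset.image_congr fun x hx => this x hx, Finset.image_id]
  -- notation for the two factors
  set P : Finset ℕ → ℂ := fun I =>
    ∏ i ∈ I, ∏ j ∈ S \ I, φ₁ τ hbar ((j : ℂ)/N - (i : ℂ)/N) with hP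
  set FS : Finset ℕ → ℂ := fun I =>
    ∑ l ∈ I.erase m, ffun τ hbar ((l : ℂ)/N - (m : ℂ)/N) with hFS
  -- P is invariant under Φ
  have hPinv : ∀ I ∈ s, P (Φ I) = P I := by
    intro I hI
    obtain ⟨hIS, _, _⟩ := hmem I hI
    have hΦIS : Φ I ⊆ S := (hmem _ (hΦmem I hI)).1
    have pair1 : P (Φ I) = ∏ p ∈ (Φ I) ×ˢ (S \ Φ I),
        φ₁ τ hbar ((p.2 : ℂ)/N - (p.1 : ℂ)/N) := by
      rw [hP]
      exact (Finset.prod_product' _ _ _).symm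
    have pair2 : P I = ∏ p ∈ I ×ˢ (S \ I),
        φ₁ τ hbar ((p.2 : ℂ)/N - (p.1 : ℂ)/N) := by
      rw [hP]
      exact (Finset.prod_product' _ _ _).symm
    rw [pair1, pair2]
    have step1 : ∏ p ∈ I ×ˢ (S \ I), φ₁ τ hbar ((σ p.2 : ℂ)/N - (σ p.1 : ℂ)/N)
        = ∏ p ∈ (Φ I) ×ˢ (S \ Φ I), φ₁ τ hbar ((p.2 : ℂ)/N - (p.1 : ℂ)/N) := by
      apply Finset.prod_nbij' (fun p => (σ p.1, σ p.2)) (fun q => (σ q.1, σ q.2))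
      · intro p hp
        rw [Finset.mem_product, Finset.mem_sdiff] at hp ⊢
        refine ⟨Finset.mem_image_of_mem σ hp.1, hσS _, ?_⟩
        intro hcon
        obtain ⟨a, haI, ha⟩ := Finset.mem_image.mp hcon
        have : p.2 = a := by
          rw [← hσσ p.2 hp.2.1, ← hσσ a (hIS haI), ha]
        exact hp.2.2 (this ▸ haI)
      · intro q hq
        rw [Finset.mem_product, Finset.mem_sdiff] at hq ⊢
        obtain ⟨a, haI, ha⟩ := Finset.mem_image.mp hq.1
        refine ⟨?_, hσS _, ?_⟩
        · rw [← ha, hσσ a (hIS haI)]; exact haI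
        · intro hcon
          exact hq.2.2 (by
            rw [← hσσ q.2 hq.2.1]
            exact Finset.mem_image_of_mem σ hcon)
      · intro p hp
        rw [Finset.mem_product, Finset.mem_sdiff] at hp
        exact Prod.ext (hσσ p.1 (hIS hp.1)) (hσσ p.2 hp.2.1)
      · intro q hq
        rw [Finset.mem_product, Finset.mem_sdiff] at hq
        exact Prod.ext (hσσ q.1 (hΦIS hq.1)) (hσσ q.2 hq.2.1)
      · intro p hp; rfl
    rw [← step1]
    have step2 : ∏ p ∈ I ×ˢ (S \ I), φ₁ τ hbar ((σ p.2 : ℂ)/N - (σ p.1 : ℂ)/N)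
        = ∏ p ∈ I ×ˢ (S \ I), φ₁ τ hbar ((p.1 : ℂ)/N - (p.2 : ℂ)/N) := by
      apply Finset.prod_congr rfl
      intro p hp
      rw [Finset.mem_product, Finset.mem_sdiff] at hp
      exact phi_sigma hN τ hbar (hIS hp.1) hp.2.1
    rw [step2]
    exact pair_prod_eq hN τ hbar hIS
  -- FS changes sign under Φ
  have hFSinv : ∀ I ∈ s, FS (Φ I) = - FS I := by
    intro I hI
    obtain ⟨hIS, _, hmI⟩ := hmem I hI
    have hΦIS : Φ I ⊆ S := (hmem _ (hΦmem I hI)).1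
    have : FS (Φ I) = ∑ l ∈ I.erase m, - ffun τ hbar ((l : ℂ)/N - (m : ℂ)/N) := by
      rw [hFS]
      apply Finset.sum_nbij' (fun l => σ l) (fun l => σ l)
      · intro l hl
        rw [Finset.mem_erase] at hl ⊢
        obtain ⟨a, haI, ha⟩ := Finset.mem_image.mp hl.2
        constructor
        · intro hcon
          apply hl.1
          rw [← hσσ l (hΦIS hl.2), hcon, hσm]
        · rw [← ha, hσσ a (hIS haI)]; exact haI
      · intro l hl
        rw [Finset.mem_erase] at hl ⊢
        refine ⟨?_, Finset.mem_image_of_mem σ hl.2⟩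
        intro hcon
        apply hl.1
        rw [← hσσ l (hIS hl.2), hcon, hσm]
      · intro l hl
        rw [Finset.mem_erase] at hl
        exact hσσ l (hΦIS hl.2)
      · intro l hl
        rw [Finset.mem_erase] at hl
        exact hσσ l (hIS hl.2)
      · intro l hl
        rw [Finset.mem_erase] at hl
        have hlS : l ∈ S := hΦIS hl.2
        have := ffun_sigma (m := m) hN τ hbar (hσS l)
        have h2 : σc N m (σ l) = l := hσσ l hlS
        rw [h2] at this
        rw [this]
    rw [this, ← Finset.sum_neg_distrib]
  -- main involution argument
  have key : ∑ I ∈ s, P I * FS I = ∑ I ∈ s, -(P I * FS I) := by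
    apply Finset.sum_nbij' Φ Φ hΦmem hΦmem hΦΦ hΦΦ
    intro I hI
    rw [hPinv I hI, hFSinv I hI]
    ring
  rw [Finset.sum_neg_distrib] at key
  have : ∑ I ∈ s, P I * FS I = 0 := by linear_combination key / 2
  exact this
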